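/- arXiv:0904.1480 — 5 statements merged into one kernel-verified Lean document; each statement's English description precedes it below -/
import Mathlib

section
/- Let U_n : ℝ → ℝ (n ∈ ℕ) be twice continuously differentiable, strictly concave, strictly increasing functions whose derivatives U_n' are bijections from ℝ onto (0,∞), such that for each x ∈ ℝ the risk aversion r_n(x) := −U_n''(x)/U_n'(x) tends to ∞ as n → ∞. Suppose there exist x₀ ∈ ℝ, α ∈ (0,∞) and β ∈ ℝ such that U_n'(x₀) → α and U_n(x₀) → β as n → ∞. Then for each y > 0, the Fenchel conjugates V_n(y) := sup_{x ∈ ℝ} (U_n(x) − x y) converge to β − x₀ y as n → ∞. -/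
open Filter MeasureTheory Set

private lemma antitone_deriv_nonpos'' {g : ℝ → ℝ} {x : ℝ} (hg : Antitone g)
    (hd : DifferentiableAt ℝ g x) : deriv g x ≤ 0 := by
  have h := hasDerivAt_iff_tendsto_slope.mp hd.hasDerivAt
  have h' : Tendsto (slope g x) (nhdsWithin x (Set.Ioi x)) (nhds (deriv g x)) :=
    h.mono_left (nhdsWithin_mono x fun z hz => ne_of_gt hz)
  refine le_of_tendsto h' ?_
  filter_upwards [self_mem_nhdsWithin] with z hz
  have h1 : g z ≤ g x := hg (le_of_lt hz)
  have h2 : (0:ℝ) < z - x := sub_pos.mpr hz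
  rw [slope_def_field]
  exact div_nonpos_of_nonpos_of_nonneg (by linarith) h2.le

private lemma concave_tangent_le'' {f : ℝ → ℝ} (hf : ConcaveOn ℝ Set.univ f)
    (hd : Differentiable ℝ f) (a x : ℝ) :
    f x ≤ f a + deriv f a * (x - a) := by
  rcases lt_trichotomy x a with h | rfl | h
  · have h1 := hf.deriv_le_slope (Set.mem_univ x) (Set.mem_univ a) h (hd a)
    rw [slope_def_field] at h1
    have h2 : (0:ℝ) < a - x := by linarith
    have h3 := (le_div_iff₀ h2).mp h1
    nlinarith
  · simp
  · have h1 := hf.slope_le_deriv (Set.mem_univ a) (Set.mem_univ x) h (hd a)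
    rw [slope_def_field] at h1
    have h2 : (0:ℝ) < x - a := by linarith
    have h3 := (div_le_iff₀ h2).mp h1
    nlinarith

/-- Under risk aversion tending to infinity and convergence of `U n` and its derivative
at `x₀`, the Fenchel conjugates `V n y = ⨆ x, U n x - x * y` converge to `β - x₀ * y`
for each `y > 0`. -/
theorem reservation_conjugate_limit (U : ℕ → ℝ → ℝ)
    (hC2 : ∀ n, ContDiff ℝ 2 (U n))
    (hconc : ∀ n, StrictConcaveOn ℝ Set.univ (U n))
    (hmono : ∀ n, StrictMono (U n))
    (hbij : ∀ n, Set.BijOn (deriv (U n)) Set.univ (Set.Ioi (0 : ℝ)))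
    (hra : ∀ x : ℝ,
      Tendsto (fun n => -(deriv (deriv (U n)) x) / deriv (U n) x) atTop atTop)
    (x₀ α β : ℝ) (hα : 0 < α)
    (hd : Tendsto (fun n => deriv (U n) x₀) atTop (nhds α))
    (hu : Tendsto (fun n => U n x₀) atTop (nhds β)) :
    ∀ y > (0 : ℝ),
      Tendsto (fun n => ⨆ x : ℝ, (U n x - x * y)) atTop (nhds (β - x₀ * y)) := by
  -- Basic regularity facts.
  have hdiff : ∀ n, Differentiable ℝ (U n) := fun n =>
    (hC2 n).differentiable (by norm_num)
  have h2 : ∀ n, ContDiff ℝ 1 (deriv (U n)) := by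
    intro n
    have h : ContDiff ℝ ((1 : WithTop ℕ∞) + 1) (U n) := (hC2 n).of_le (by norm_num)
    exact (contDiff_succ_iff_deriv.mp h).2.2
  have hdiff' : ∀ n, Differentiable ℝ (deriv (U n)) := fun n =>
    (h2 n).differentiable one_ne_zero
  have hcont'' : ∀ n, Continuous (deriv (deriv (U n))) := fun n =>
    (h2 n).continuous_deriv le_rfl
  have hpos : ∀ n x, 0 < deriv (U n) x := fun n x =>
    (hbij n).mapsTo (Set.mem_univ x)
  have hanti : ∀ n, Antitone (deriv (U n)) := fun n =>
    antitoneOn_univ.mp ((hconc n).concaveOn.antitoneOn_deriv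
      fun x _ => (hdiff n).differentiableAt)
  have hD2 : ∀ n x, deriv (deriv (U n)) x ≤ 0 := fun n x =>
    antitone_deriv_nonpos'' (hanti n) ((hdiff' n).differentiableAt)
  set r : ℕ → ℝ → ℝ := fun n t => -(deriv (deriv (U n)) t) / deriv (U n) t with hr
  have hra' : ∀ t, Tendsto (fun n => r n t) atTop atTop := by
    intro t; simp only [hr]; exact hra t
  have hrcont : ∀ n, Continuous (r n) := by
    intro n
    simp only [hr]
    exact ((hcont'' n).neg).div (h2 n).continuous fun t => (hpos n t).ne'
  have hrnonneg : ∀ n t, 0 ≤ r n t := by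
    intro n t
    simp only [hr]
    exact div_nonneg (neg_nonneg.mpr (hD2 n t)) (hpos n t).le
  -- Fundamental theorem of calculus for log ∘ deriv (U n).
  have hlog : ∀ n (a b : ℝ),
      Real.log (deriv (U n) b) - Real.log (deriv (U n) a) = - ∫ t in a..b, r n t := by
    intro n a b
    have h1 : ∀ t ∈ Set.uIcc a b, HasDerivAt (fun s => Real.log (deriv (U n) s))
        (- r n t) t := by
      intro t _
      have hdt := ((hdiff' n) t).hasDerivAt
      have := hdt.log (hpos n t).ne'
      simpa [hr, neg_div] using this
    have h2' : IntervalIntegrable (fun t => - r n t) volume a b :=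
      ((hrcont n).neg).intervalIntegrable a b
    have h3 := intervalIntegral.integral_eq_sub_of_hasDerivAt h1 h2'
    rw [intervalIntegral.integral_neg] at h3
    linarith
  -- Divergence of the integrals of the risk aversion.
  have hIdiv : ∀ a b : ℝ, a < b →
      Tendsto (fun n => ∫ t in a..b, r n t) atTop atTop := by
    intro a b hab
    rw [tendsto_atTop]
    intro M
    set K : ℝ := (max M 0 + 1) / (b - a) with hK
    have hbapos : (0:ℝ) < b - a := by linarith
    have hKpos : 0 < K := div_pos (by positivity) hbapos
    have hKb : (b - a) * K = max M 0 + 1 := by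
      rw [hK]; field_simp
    have hdom : Tendsto (fun n => ∫ t in a..b, min (r n t) K) atTop
        (nhds (∫ t in a..b, (K : ℝ))) := by
      apply intervalIntegral.tendsto_integral_filter_of_dominated_convergence (fun _ => K)
      · exact Eventually.of_forall fun n =>
          (((hrcont n).min continuous_const)).aestronglyMeasurable
      · refine Eventually.of_forall fun n => ae_of_all _ fun t _ => ?_
        rw [Real.norm_eq_abs, abs_of_nonneg (le_min (hrnonneg n t) hKpos.le)]
        exact min_le_right _ _
      · exact intervalIntegrable_const
      · refine ae_of_all _ fun t _ => ?_
        refine tendsto_const_nhds.congr' ?_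
        filter_upwards [(hra' t).eventually_ge_atTop K] with n hn
        exact (min_eq_right hn).symm
    rw [intervalIntegral.integral_const, smul_eq_mul, hKb] at hdom
    have hev : ∀ᶠ n in atTop, max M 0 ≤ ∫ t in a..b, min (r n t) K :=
      hdom.eventually (eventually_ge_nhds (by linarith))
    filter_upwards [hev] with n hn
    have hmono' : (∫ t in a..b, min (r n t) K) ≤ ∫ t in a..b, r n t := by
      apply intervalIntegral.integral_mono_on hab.le
      · exact ((hrcont n).min continuous_const).intervalIntegrable a b
      · exact (hrcont n).intervalIntegrable a b
      · exact fun t _ => min_le_left _ _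
    have hM : M ≤ max M 0 := le_max_left _ _
    linarith
  -- log of deriv at x₀ converges.
  have htl : Tendsto (fun n => Real.log (deriv (U n) x₀)) atTop (nhds (Real.log α)) :=
    hd.log hα.ne'
  intro y hy
  -- eventual bounds on the derivative at x₀ ± ε
  have evA : ∀ ε : ℝ, 0 < ε → ∀ᶠ n in atTop, deriv (U n) (x₀ + ε) ≤ y := by
    intro ε hε
    have hI := (hIdiv x₀ (x₀ + ε) (by linarith)).eventually_ge_atTop
      (Real.log α + 1 - Real.log y)
    have hL : ∀ᶠ n in atTop, Real.log (deriv (U n) x₀) ≤ Real.log α + 1 :=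
      htl.eventually (eventually_le_nhds (by linarith))
    filter_upwards [hI, hL] with n hIn hLn
    have h3 := hlog n x₀ (x₀ + ε)
    have h4 : Real.log (deriv (U n) (x₀ + ε)) ≤ Real.log y := by linarith
    exact (Real.log_le_log_iff (hpos n _) hy).mp h4
  have evB : ∀ ε : ℝ, 0 < ε → ∀ᶠ n in atTop, y ≤ deriv (U n) (x₀ - ε) := by
    intro ε hε
    have hI := (hIdiv (x₀ - ε) x₀ (by linarith)).eventually_ge_atTop
      (Real.log y + 1 - Real.log α)
    have hL : ∀ᶠ n in atTop, Real.log α - 1 ≤ Real.log (deriv (U n) x₀) :=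
      htl.eventually (eventually_ge_nhds (by linarith))
    filter_upwards [hI, hL] with n hIn hLn
    have h3 := hlog n (x₀ - ε) x₀
    have h4 : Real.log y ≤ Real.log (deriv (U n) (x₀ - ε)) := by linarith
    exact (Real.log_le_log_iff hy (hpos n _)).mp h4
  -- the key pointwise bound on U n x - x * y
  have key : ∀ (n : ℕ) (ε : ℝ), 0 < ε → deriv (U n) (x₀ + ε) ≤ y →
      y ≤ deriv (U n) (x₀ - ε) →
      ∀ x : ℝ, U n x - x * y ≤ U n x₀ - x₀ * y + (deriv (U n) x₀ + y) * ε := by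
    intro n ε hε hA hB x
    have d0 : 0 < deriv (U n) x₀ := hpos n x₀
    rcases le_total x (x₀ - ε) with hx | hx
    · have t1 := concave_tangent_le'' (hconc n).concaveOn (hdiff n) (x₀ - ε) x
      have hUm : U n (x₀ - ε) ≤ U n x₀ := ((hmono n).monotone (by linarith))
      nlinarith [mul_nonneg (sub_nonneg.mpr hB) (by linarith : (0:ℝ) ≤ x₀ - ε - x),
        mul_nonneg d0.le hε.le, mul_nonneg hy.le hε.le]
    · rcases le_total x (x₀ + ε) with hx2 | hx2
      · have t0 := concave_tangent_le'' (hconc n).concaveOn (hdiff n) x₀ x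
        nlinarith [mul_nonneg d0.le (by linarith : (0:ℝ) ≤ x₀ + ε - x),
          mul_nonneg hy.le (by linarith : (0:ℝ) ≤ x - (x₀ - ε))]
      · have t1 := concave_tangent_le'' (hconc n).concaveOn (hdiff n) (x₀ + ε) x
        have t2 := concave_tangent_le'' (hconc n).concaveOn (hdiff n) x₀ (x₀ + ε)
        nlinarith [mul_nonneg (sub_nonneg.mpr hA) (by linarith : (0:ℝ) ≤ x - (x₀ + ε)),
          mul_nonneg hy.le hε.le]
  -- lower bound on the sup
  have hlow : Tendsto (fun n => U n x₀ - x₀ * y) atTop (nhds (β - x₀ * y)) :=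
    hu.sub_const _
  rw [tendsto_order]
  constructor
  · intro c hc
    filter_upwards [hlow.eventually (eventually_gt_nhds hc), evA 1 one_pos, evB 1 one_pos]
      with n hn hA hB
    have hbdd : BddAbove (Set.range fun x : ℝ => U n x - x * y) := by
      refine ⟨U n x₀ - x₀ * y + (deriv (U n) x₀ + y) * 1, ?_⟩
      rintro _ ⟨x, rfl⟩
      exact key n 1 one_pos hA hB x
    exact lt_of_lt_of_le hn (le_ciSup hbdd x₀)
  · intro c hc
    have hαy : (0:ℝ) < α + 1 + y := by linarith
    set ε : ℝ := (c - (β - x₀ * y)) / (2 * (α + 1 + y)) with hεdef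
    have hεpos : 0 < ε := div_pos (by linarith) (by linarith)
    have hεeq : (α + 1 + y) * ε = (c - (β - x₀ * y)) / 2 := by
      rw [hεdef]; field_simp
    have hdev : ∀ᶠ n in atTop, deriv (U n) x₀ < α + 1 :=
      hd.eventually (eventually_lt_nhds (by linarith))
    have hlev : ∀ᶠ n in atTop,
        U n x₀ - x₀ * y < (β - x₀ * y) + (c - (β - x₀ * y)) / 2 :=
      hlow.eventually (eventually_lt_nhds (by linarith))
    filter_upwards [hdev, hlev, evA ε hεpos, evB ε hεpos] with n hdn hln hA hB
    have hsup : (⨆ x : ℝ, U n x - x * y) ≤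
        U n x₀ - x₀ * y + (deriv (U n) x₀ + y) * ε :=
      ciSup_le (key n ε hεpos hA hB)
    have h5 : (deriv (U n) x₀ + y) * ε ≤ (α + 1 + y) * ε := by
      apply mul_le_mul_of_nonneg_right (by linarith) hεpos.le
    calc (⨆ x : ℝ, U n x - x * y) ≤ U n x₀ - x₀ * y + (deriv (U n) x₀ + y) * ε := hsup
      _ ≤ U n x₀ - x₀ * y + (α + 1 + y) * ε := by linarith
      _ < c := by rw [hεeq]; linarith
end

section
/- Let U_n : ℝ → ℝ (n ∈ ℕ) be twice continuously differentiable, strictly concave, strictly increasing functions whose derivatives U_n' are bijections from ℝ onto (0,∞), such that for each x ∈ ℝ the risk aversion r_n(x) := −U_n''(x)/U_n'(x) tends to ∞ as n → ∞, and suppose there exist x₀ ∈ ℝ and α ∈ (0,∞) with U_n'(x₀) → α as n → ∞. Let I_n : (0,∞) → ℝ denote the inverse of U_n'. Then for each y > 0, I_n(y) → x₀ as n → ∞. -/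
open Filter

/-- The derivative of an antitone function is nonpositive. -/
lemma aux_antitone_deriv_nonpos {f : ℝ → ℝ} (hf : Antitone f) {x f' : ℝ}
    (h : HasDerivAt f f' x) : f' ≤ 0 := by
  have h1 := hasDerivAt_iff_tendsto_slope.mp h
  refine le_of_tendsto h1 ?_
  filter_upwards [self_mem_nhdsWithin] with z hz
  have hz' : z ≠ x := hz
  rw [slope_def_field]
  rcases lt_or_gt_of_ne hz' with h' | h'
  · exact div_nonpos_of_nonneg_of_nonpos (by linarith [hf h'.le]) (by linarith)
  · exact div_nonpos_of_nonpos_of_nonneg (by linarith [hf h'.le]) (by linarith)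

/-- If nonnegative continuous functions tend to infinity pointwise, their integrals over a
nontrivial interval tend to infinity. -/
lemma aux_integral_tendsto_atTop {a b : ℝ} (hab : a < b) (r : ℕ → ℝ → ℝ)
    (hcont : ∀ n, Continuous (r n)) (hnn : ∀ n x, 0 ≤ r n x)
    (htend : ∀ x, Tendsto (fun n => r n x) atTop atTop) :
    Tendsto (fun n => ∫ x in a..b, r n x) atTop atTop := by
  rw [tendsto_atTop]
  intro M
  set C : ℝ := max 1 ((M + 1) / (b - a)) with hC
  have hCpos : 0 < C := lt_of_lt_of_le one_pos (le_max_left _ _)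
  have hbapos : 0 < b - a := by linarith
  -- truncated functions
  set F : ℕ → ℝ → ℝ := fun n x => min (r n x) C with hF
  have hFcont : ∀ n, Continuous (F n) := fun n => (hcont n).min continuous_const
  -- dominated convergence for the truncations
  have hdom : Tendsto (fun n => ∫ x in a..b, F n x) atTop (nhds (∫ _x in a..b, C)) := by
    refine intervalIntegral.tendsto_integral_filter_of_dominated_convergence
      (f := fun _ => C) (fun _ => C)
      (Filter.Eventually.of_forall fun n => (hFcont n).aestronglyMeasurable) ?_
      intervalIntegrable_const ?_
    · refine Filter.Eventually.of_forall fun n => MeasureTheory.ae_of_all _ fun x _ => ?_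
      rw [Real.norm_eq_abs, abs_of_nonneg (le_min (hnn n x) hCpos.le)]
      exact min_le_right _ _
    · refine MeasureTheory.ae_of_all _ fun x _ => ?_
      have : ∀ᶠ n in atTop, F n x = C := by
        filter_upwards [(htend x).eventually_ge_atTop C] with n hn
        exact min_eq_right hn
      exact Tendsto.congr' (Filter.EventuallyEq.symm this) tendsto_const_nhds
  have hint : (∫ _x in a..b, C) = (b - a) * C := by
    rw [intervalIntegral.integral_const, smul_eq_mul]
  have hev : ∀ᶠ n in atTop, (b - a) * C - 1 < ∫ x in a..b, F n x := by
    rw [hint] at hdom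
    exact hdom.eventually (lt_mem_nhds (by linarith))
  filter_upwards [hev] with n hn
  have hle : (∫ x in a..b, F n x) ≤ ∫ x in a..b, r n x := by
    refine intervalIntegral.integral_mono_on hab.le ((hFcont n).intervalIntegrable a b)
      ((hcont n).intervalIntegrable a b) ?_
    intro x _
    exact min_le_left _ _
  have hCge : (M + 1) / (b - a) ≤ C := le_max_right _ _
  have : M + 1 ≤ (b - a) * C := by
    rw [div_le_iff₀ hbapos] at hCge
    linarith [hCge]
  linarith

/-- If risk aversions tend to infinity and `deriv (U n) x₀ → α > 0`, the inverses `I n`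
of the marginal utilities satisfy `I n y → x₀` for each `y > 0`. -/
theorem inverse_marginal_utility_tendsto (U : ℕ → ℝ → ℝ)
    (hC2 : ∀ n, ContDiff ℝ 2 (U n))
    (hconc : ∀ n, StrictConcaveOn ℝ Set.univ (U n))
    (hmono : ∀ n, StrictMono (U n))
    (hbij : ∀ n, Set.BijOn (deriv (U n)) Set.univ (Set.Ioi (0 : ℝ)))
    (hra : ∀ x : ℝ,
      Tendsto (fun n => -(deriv (deriv (U n)) x) / deriv (U n) x) atTop atTop)
    (x₀ α : ℝ) (hα : 0 < α)
    (hd : Tendsto (fun n => deriv (U n) x₀) atTop (nhds α))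
    (I : ℕ → ℝ → ℝ)
    (hI_right : ∀ n, ∀ y > (0 : ℝ), deriv (U n) (I n y) = y)
    (hI_left : ∀ n, ∀ x : ℝ, I n (deriv (U n) x) = x) :
    ∀ y > (0 : ℝ), Tendsto (fun n => I n y) atTop (nhds x₀) := by
  set f : ℕ → ℝ → ℝ := fun n => deriv (U n) with hf
  set g : ℕ → ℝ → ℝ := fun n => deriv (f n) with hg
  have hC1f : ∀ n, ContDiff ℝ 1 (f n) := by
    intro n
    have h2 : ContDiff ℝ (1 + 1 : ℕ) (U n) := by exact_mod_cast hC2 n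
    rw [show ((1 + 1 : ℕ) : WithTop ℕ∞) = (1 : WithTop ℕ∞) + 1 by norm_cast] at h2
    exact (contDiff_succ_iff_deriv.mp h2).2.2
  have hfdiff : ∀ n, Differentiable ℝ (f n) := fun n => (hC1f n).differentiable one_ne_zero
  have hfcont : ∀ n, Continuous (f n) := fun n => (hfdiff n).continuous
  have hgcont : ∀ n, Continuous (g n) := fun n => (hC1f n).continuous_deriv le_rfl
  have hfpos : ∀ n x, 0 < f n x := fun n x => (hbij n).mapsTo (Set.mem_univ x)
  have hanti : ∀ n, Antitone (f n) := by
    intro n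
    rw [← antitoneOn_univ]
    exact (hconc n).concaveOn.antitoneOn_deriv
      (fun x _ => ((hC2 n).differentiable two_ne_zero).differentiableAt)
  have hgnp : ∀ n x, g n x ≤ 0 := fun n x =>
    aux_antitone_deriv_nonpos (hanti n) ((hfdiff n x).hasDerivAt)
  -- FTC for log ∘ f n
  have key : ∀ n (a b : ℝ),
      Real.log (f n b) - Real.log (f n a) = ∫ x in a..b, g n x / f n x := by
    intro n a b
    refine (intervalIntegral.integral_eq_sub_of_hasDerivAt (f := fun x => Real.log (f n x))
      (fun x _ => ?_) ?_).symm
    · exact ((hfdiff n x).hasDerivAt).log (hfpos n x).ne'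
    · exact (((hgcont n).div (hfcont n) (fun x => (hfpos n x).ne')).intervalIntegrable a b)
  -- risk aversion integrand
  set r : ℕ → ℝ → ℝ := fun n x => -(g n x) / f n x with hr
  have hrcont : ∀ n, Continuous (r n) :=
    fun n => ((hgcont n).neg.div (hfcont n) (fun x => (hfpos n x).ne'))
  have hrnn : ∀ n x, 0 ≤ r n x :=
    fun n x => div_nonneg (neg_nonneg.mpr (hgnp n x)) (hfpos n x).le
  have hkey' : ∀ n (a b : ℝ),
      Real.log (f n b) = Real.log (f n a) - ∫ x in a..b, r n x := by
    intro n a b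
    have h1 : (∫ x in a..b, g n x / f n x) = -∫ x in a..b, r n x := by
      rw [← intervalIntegral.integral_neg]
      congr 1
      funext x
      rw [hr]
      ring
    have := key n a b
    rw [h1] at this
    linarith
  have hlogx₀ : Tendsto (fun n => Real.log (f n x₀)) atTop (nhds (Real.log α)) :=
    ((Real.continuousAt_log hα.ne').tendsto).comp hd
  -- for c > x₀: f n c → 0
  have hright : ∀ c, x₀ < c → Tendsto (fun n => f n c) atTop (nhds 0) := by
    intro c hc
    have hR : Tendsto (fun n => ∫ x in x₀..c, r n x) atTop atTop :=
      aux_integral_tendsto_atTop hc r hrcont hrnn (fun x => hra x)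
    have hlog : Tendsto (fun n => Real.log (f n c)) atTop atBot := by
      have := hlogx₀.add_atBot (tendsto_neg_atBot_iff.mpr hR)
      refine this.congr fun n => ?_
      rw [hkey' n x₀ c]; ring
    have hexp : Tendsto (fun n => Real.exp (Real.log (f n c))) atTop (nhds 0) :=
      Real.tendsto_exp_atBot.comp hlog
    refine hexp.congr fun n => Real.exp_log (hfpos n c)
  -- for c < x₀: f n c → ∞
  have hleft : ∀ c, c < x₀ → Tendsto (fun n => f n c) atTop atTop := by
    intro c hc
    have hR : Tendsto (fun n => ∫ x in c..x₀, r n x) atTop atTop :=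
      aux_integral_tendsto_atTop hc r hrcont hrnn (fun x => hra x)
    have hlog : Tendsto (fun n => Real.log (f n c)) atTop atTop := by
      have := hlogx₀.add_atTop hR
      refine this.congr fun n => ?_
      have := hkey' n c x₀
      linarith
    have hexp : Tendsto (fun n => Real.exp (Real.log (f n c))) atTop atTop :=
      Real.tendsto_exp_atTop.comp hlog
    refine hexp.congr fun n => Real.exp_log (hfpos n c)
  intro y hy
  rw [tendsto_order]
  constructor
  · intro c hc
    filter_upwards [(hleft c hc).eventually_gt_atTop y] with n hn
    by_contra h
    push_neg at h
    have := hanti n h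
    rw [show f n (I n y) = y from hI_right n y hy] at this
    linarith
  · intro c hc
    have h0 : Tendsto (fun n => f n c) atTop (nhds 0) := hright c hc
    filter_upwards [h0.eventually (gt_mem_nhds hy)] with n hn
    by_contra h
    push_neg at h
    have := hanti n h
    rw [show f n (I n y) = y from hI_right n y hy] at this
    linarith
end

section
/- Let (Ω, 𝓕, P) be a probability space, K > 0, α ∈ (0,1), and let Z, Z' : Ω → [0,∞) be random variables with Z integrable, Z > 0 almost surely, and Z' ≤ K·Z almost surely. Let V_n : (0,∞) → ℝ (n ∈ ℕ) be measurable functions for which there exist constants C₁, C₂, C₃ ≥ 0 such that V_n(λ y) ≤ C₁ V_n(y) + C₂ y + C₃ for all n ∈ ℕ, all y > 0 and all λ ∈ [α, α + (1−α)K], and there exist constants b, c ∈ ℝ such that V_n(y) ≥ b − c·y for all n ∈ ℕ and all y > 0. If the family (V_n(Z))_{n ∈ ℕ} is uniformly integrable with respect to P, then the family (V_n(α Z + (1−α) Z'))_{n ∈ ℕ} is uniformly integrable with respect to P. -/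
open MeasureTheory

/-- Domination lemma: if `‖g n‖ ≤ C₁ * ‖f n‖ + h` a.e. with `(f n)` uniformly
integrable in `L¹` and `h ∈ L¹`, then `(g n)` is uniformly integrable. -/
lemma uniformIntegrable_of_dominated {Ω : Type*} [MeasurableSpace Ω]
    {P : Measure Ω} {f g : ℕ → Ω → ℝ} {h : Ω → ℝ} {C₁ : ℝ} (hC₁ : 0 ≤ C₁)
    (hgm : ∀ n, AEStronglyMeasurable (g n) P)
    (hh : MemLp h 1 P)
    (hbd : ∀ n, ∀ᵐ ω ∂P, ‖g n ω‖ ≤ C₁ * ‖f n ω‖ + h ω)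
    (hf : UniformIntegrable f 1 P) : UniformIntegrable g 1 P := by
  obtain ⟨hfm, hfui, C₀, hC₀⟩ := hf
  -- key pointwise comparison for indicators
  have key : ∀ (n : ℕ) (s : Set Ω), MeasurableSet s →
      eLpNorm (s.indicator (g n)) 1 P ≤
        ENNReal.ofReal C₁ * eLpNorm (s.indicator (f n)) 1 P +
          eLpNorm (s.indicator h) 1 P := by
    intro n s hs
    have h1 : eLpNorm (s.indicator (g n)) 1 P ≤
        eLpNorm (s.indicator (fun ω => C₁ * ‖f n ω‖ + h ω)) 1 P := by
      refine eLpNorm_mono_ae ?_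
      filter_upwards [hbd n] with ω hω
      by_cases hωs : ω ∈ s
      · simp only [Set.indicator_of_mem hωs]
        refine hω.trans (le_abs_self _)
      · simp [Set.indicator_of_notMem hωs]
    refine h1.trans ?_
    have heq : s.indicator (fun ω => C₁ * ‖f n ω‖ + h ω) =
        (fun ω => s.indicator (fun ω => C₁ * ‖f n ω‖) ω + s.indicator h ω) := by
      funext ω; by_cases hωs : ω ∈ s <;> simp [Set.indicator_of_mem, Set.indicator_of_notMem, hωs]
    rw [heq]
    have hm1 : AEStronglyMeasurable (s.indicator (fun ω => C₁ * ‖f n ω‖)) P :=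
      (((hfm n).norm.const_smul C₁).indicator hs)
    have hm2 : AEStronglyMeasurable (s.indicator h) P := hh.1.indicator hs
    refine (eLpNorm_add_le hm1 hm2 le_rfl).trans ?_
    gcongr
    have : s.indicator (fun ω => C₁ * ‖f n ω‖) = C₁ • fun ω => ‖s.indicator (f n) ω‖ := by
      funext ω
      simp only [Pi.smul_apply, smul_eq_mul]
      rw [norm_indicator_eq_indicator_norm]
      by_cases hωs : ω ∈ s <;>
        simp [Set.indicator_of_mem, Set.indicator_of_notMem, hωs]
    rw [this, eLpNorm_const_smul, eLpNorm_norm]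
    simp [ENNReal.smul_def, enorm_eq_nnnorm, Real.nnnorm_of_nonneg hC₁, ENNReal.ofReal, Real.toNNReal_of_nonneg hC₁]
  refine ⟨hgm, ?_, ?_⟩
  · intro ε hε
    have hε2 : (0:ℝ) < ε / 2 := by linarith
    have hε1 : (0:ℝ) < ε / 2 / (C₁ + 1) := by positivity
    obtain ⟨δ₁, hδ₁, hfδ⟩ := hfui hε1
    obtain ⟨δ₂, hδ₂, hhδ⟩ := hh.eLpNorm_indicator_le le_rfl (by norm_num) hε2
    refine ⟨min δ₁ δ₂, lt_min hδ₁ hδ₂, fun n s hs hμs => ?_⟩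
    have hμ1 : P s ≤ ENNReal.ofReal δ₁ :=
      hμs.trans (ENNReal.ofReal_le_ofReal (min_le_left _ _))
    have hμ2 : P s ≤ ENNReal.ofReal δ₂ :=
      hμs.trans (ENNReal.ofReal_le_ofReal (min_le_right _ _))
    refine (key n s hs).trans ?_
    have h2 : ENNReal.ofReal C₁ * eLpNorm (s.indicator (f n)) 1 P ≤
        ENNReal.ofReal (ε / 2) := by
      calc ENNReal.ofReal C₁ * eLpNorm (s.indicator (f n)) 1 P
          ≤ ENNReal.ofReal C₁ * ENNReal.ofReal (ε / 2 / (C₁ + 1)) := by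
            gcongr; exact hfδ n s hs hμ1
        _ = ENNReal.ofReal (C₁ * (ε / 2 / (C₁ + 1))) := by
            rw [ENNReal.ofReal_mul hC₁]
        _ ≤ ENNReal.ofReal (ε / 2) := by
            refine ENNReal.ofReal_le_ofReal ?_
            rw [div_div]
            rw [mul_div_assoc']
            refine (div_le_iff₀ (by positivity)).2 ?_
            nlinarith
    calc ENNReal.ofReal C₁ * eLpNorm (s.indicator (f n)) 1 P + eLpNorm (s.indicator h) 1 P
        ≤ ENNReal.ofReal (ε / 2) + ENNReal.ofReal (ε / 2) :=
          add_le_add h2 (hhδ s hs hμ2)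
      _ = ENNReal.ofReal ε := by
          rw [← ENNReal.ofReal_add hε2.le hε2.le]; norm_num
  · refine ⟨C₁.toNNReal * C₀ + (eLpNorm h 1 P).toNNReal, fun n => ?_⟩
    have hkey := key n Set.univ MeasurableSet.univ
    simp only [Set.indicator_univ] at hkey
    refine hkey.trans ?_
    push_cast
    rw [ENNReal.coe_toNNReal hh.2.ne]
    gcongr
    · rw [ENNReal.ofReal]
    · exact hC₀ n

/-- Uniform integrability of `V n (Z)` propagates to `V n (α Z + (1 - α) Z')` when
`Z' ≤ K Z` a.s., under a uniform elasticity-type growth bound and a uniform affine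
lower bound on the `V n`. -/
theorem uniformIntegrable_convex_combination {Ω : Type*} [MeasurableSpace Ω]
    (P : Measure Ω) [IsProbabilityMeasure P]
    (K : ℝ) (hK : 0 < K) (a : ℝ) (ha : a ∈ Set.Ioo (0 : ℝ) 1)
    (Z Z' : Ω → ℝ) (hZm : Measurable Z) (hZ'm : Measurable Z')
    (hZnn : ∀ ω, 0 ≤ Z ω) (hZ'nn : ∀ ω, 0 ≤ Z' ω)
    (hZint : Integrable Z P)
    (hZpos : ∀ᵐ ω ∂P, 0 < Z ω)
    (hZ'K : ∀ᵐ ω ∂P, Z' ω ≤ K * Z ω)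
    (V : ℕ → ℝ → ℝ) (hVm : ∀ n, Measurable (V n))
    (C₁ C₂ C₃ : ℝ) (hC₁ : 0 ≤ C₁) (hC₂ : 0 ≤ C₂) (hC₃ : 0 ≤ C₃)
    (hgrowth : ∀ n, ∀ y > (0 : ℝ), ∀ l ∈ Set.Icc a (a + (1 - a) * K),
      V n (l * y) ≤ C₁ * V n y + C₂ * y + C₃)
    (b c : ℝ) (hlb : ∀ n, ∀ y > (0 : ℝ), b - c * y ≤ V n y)
    (hUI : UniformIntegrable (fun n ω => V n (Z ω)) 1 P) :
    UniformIntegrable (fun n ω => V n (a * Z ω + (1 - a) * Z' ω)) 1 P := by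
  obtain ⟨ha0, ha1⟩ := ha
  set M : ℝ := a + (1 - a) * K with hM
  have hMa : a ≤ M := by nlinarith
  set h : Ω → ℝ := fun ω => (C₂ + |c| * M) * Z ω + (C₃ + |b|) with hh_def
  have hhmem : MemLp h 1 P :=
    memLp_one_iff_integrable.2 ((hZint.const_mul _).add (integrable_const _))
  have hgm : ∀ n, AEStronglyMeasurable (fun ω => V n (a * Z ω + (1 - a) * Z' ω)) P := fun n =>
    ((hVm n).comp ((hZm.const_mul a).add (hZ'm.const_mul (1 - a)))).aestronglyMeasurable
  have hbd : ∀ n, ∀ᵐ ω ∂P,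
      ‖V n (a * Z ω + (1 - a) * Z' ω)‖ ≤ C₁ * ‖V n (Z ω)‖ + h ω := by
    intro n
    filter_upwards [hZpos, hZ'K] with ω hz hzk
    have hz' : 0 ≤ Z' ω := hZ'nn ω
    set z := Z ω
    set z' := Z' ω
    set l : ℝ := a + (1 - a) * (z' / z) with hl_def
    have hlz : l * z = a * z + (1 - a) * z' := by rw [add_mul, mul_assoc, div_mul_cancel₀ _ hz.ne']
    have hdiv : 0 ≤ z' / z := div_nonneg hz' hz.le
    have hdivK : z' / z ≤ K := (div_le_iff₀ hz).2 (by linarith)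
    have hl_mem : l ∈ Set.Icc a M := ⟨by nlinarith, by nlinarith⟩
    have hwpos : 0 < a * z + (1 - a) * z' := by nlinarith
    have hup := hgrowth n z hz l hl_mem
    rw [hlz] at hup
    have hlow := hlb n (a * z + (1 - a) * z') hwpos
    have hzM : a * z + (1 - a) * z' ≤ M * z := by nlinarith
    have habs : V n z ≤ |V n z| := le_abs_self _
    have hcabs : c ≤ |c| := le_abs_self c
    have hcnn : 0 ≤ |c| := abs_nonneg c
    have hbabs : -|b| ≤ b := neg_abs_le b
    have hVnn : 0 ≤ |V n z| := abs_nonneg _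
    rw [Real.norm_eq_abs, Real.norm_eq_abs, abs_le]
    simp only [hh_def]
    constructor
    · have h1 : c * (a * z + (1 - a) * z') ≤ |c| * (M * z) := by nlinarith
      nlinarith [mul_nonneg hC₁ hVnn, mul_nonneg hC₂ hz.le]
    · nlinarith [mul_nonneg hC₁ hVnn, mul_nonneg (mul_nonneg hcnn (le_trans ha0.le hMa)) hz.le,
        abs_nonneg b, mul_le_mul_of_nonneg_left habs hC₁]
  exact uniformIntegrable_of_dominated hC₁ hgm hhmem hbd hUI
end

section
/- For α > 0 let U_α : ℝ → ℝ be defined by U_α(x) := −(1/α)·((x+1)^{−α} − 1) for x > 0 and U_α(x) := −(1/(α+2))·((1−x)^{α+2} − 1) for x ≤ 0. Then its Fenchel conjugate V_α(y) := sup_{x ∈ ℝ} (U_α(x) − x y) satisfies, for every y > 0: V_α(y) = 1/(α+2) − y + (1 − 1/(α+2))·y^{(α+2)/(α+1)} if y > 1, and V_α(y) = 1/α + y − (1 + 1/α)·y^{α/(α+1)} if 0 < y ≤ 1. -/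
open Real

/-- AM-GM bound for the positive branch. -/
private lemma pu_amgm1 {α s y : ℝ} (hα : 0 < α) (hs : 0 < s) (hy : 0 < y) :
    (1 + 1/α) * y ^ (α/(α+1)) ≤ s ^ (-α) / α + s * y := by
  have hα1 : (0:ℝ) < α + 1 := by linarith
  have hw : 1/(α+1) + α/(α+1) = 1 := by field_simp; ring
  have hc : (0:ℝ) < (α+1)/α := by positivity
  have hsp : (0:ℝ) < s ^ (-α) := rpow_pos_of_pos hs _
  have h := Real.geom_mean_le_arith_mean2_weighted
    (by positivity : (0:ℝ) ≤ 1/(α+1)) (by positivity : (0:ℝ) ≤ α/(α+1))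
    (by positivity : (0:ℝ) ≤ (α+1)/α * s^(-α)) (by positivity : (0:ℝ) ≤ (α+1)/α * (s*y)) hw
  have e1 : ((α+1)/α * s^(-α)) ^ (1/(α+1)) * ((α+1)/α * (s*y)) ^ (α/(α+1))
      = (1 + 1/α) * y ^ (α/(α+1)) := by
    have hL : (0:ℝ) < ((α+1)/α * s^(-α)) ^ (1/(α+1)) * ((α+1)/α * (s*y)) ^ (α/(α+1)) := by
      positivity
    have hR : (0:ℝ) < (1 + 1/α) * y ^ (α/(α+1)) := by positivity
    apply Real.log_injOn_pos (Set.mem_Ioi.2 hL) (Set.mem_Ioi.2 hR)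
    rw [Real.log_mul (by positivity) (by positivity), Real.log_mul (by positivity) (by positivity),
      Real.log_rpow (by positivity), Real.log_rpow (by positivity),
      Real.log_mul hc.ne' hsp.ne', Real.log_mul hc.ne' (by positivity),
      Real.log_mul hs.ne' hy.ne', Real.log_rpow hs, Real.log_rpow hy]
    have h1 : (1:ℝ) + 1/α = (α+1)/α := by field_simp
    rw [h1]; field_simp; ring
  have e2 : 1/(α+1) * ((α+1)/α * s^(-α)) + α/(α+1) * ((α+1)/α * (s*y))
      = s ^ (-α) / α + s * y := by field_simp
  rw [e1, e2] at h
  exact h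

/-- AM-GM / Young bound for the negative branch. -/
private lemma pu_amgm2 {α t y : ℝ} (hα : 0 < α) (ht : 0 < t) (hy : 0 < y) :
    t * y ≤ t ^ (α+2) / (α+2) + (α+1)/(α+2) * y ^ ((α+2)/(α+1)) := by
  have hα1 : (0:ℝ) < α + 1 := by linarith
  have hα2 : (0:ℝ) < α + 2 := by linarith
  have hw : 1/(α+2) + (α+1)/(α+2) = 1 := by field_simp; ring
  have htp : (0:ℝ) < t ^ (α+2) := rpow_pos_of_pos ht _
  have hyp : (0:ℝ) < y ^ ((α+2)/(α+1)) := rpow_pos_of_pos hy _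
  have h := Real.geom_mean_le_arith_mean2_weighted
    (by positivity : (0:ℝ) ≤ 1/(α+2)) (by positivity : (0:ℝ) ≤ (α+1)/(α+2))
    htp.le hyp.le hw
  have e1 : (t ^ (α+2)) ^ (1/(α+2)) * (y ^ ((α+2)/(α+1))) ^ ((α+1)/(α+2)) = t * y := by
    have hL : (0:ℝ) < (t ^ (α+2)) ^ (1/(α+2)) * (y ^ ((α+2)/(α+1))) ^ ((α+1)/(α+2)) := by
      positivity
    apply Real.log_injOn_pos (Set.mem_Ioi.2 hL) (Set.mem_Ioi.2 (by positivity))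
    rw [Real.log_mul (by positivity) (by positivity), Real.log_rpow htp, Real.log_rpow hyp,
      Real.log_rpow ht, Real.log_rpow hy, Real.log_mul ht.ne' hy.ne']
    field_simp
  rw [e1] at h
  calc t * y ≤ 1/(α+2) * t ^ (α+2) + (α+1)/(α+2) * y ^ ((α+2)/(α+1)) := h
    _ = t ^ (α+2) / (α+2) + (α+1)/(α+2) * y ^ ((α+2)/(α+1)) := by ring

/-- Bernoulli inequality with negative exponent. -/
private lemma pu_bern_neg {α u : ℝ} (hα : 0 < α) (hu : 0 ≤ u) :
    1 - α * u ≤ (1 + u) ^ (-α) := by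
  have h1u : (0:ℝ) < 1 + u := by linarith
  have hp : (0:ℝ) < (1+u) ^ (-α) := rpow_pos_of_pos h1u _
  rcases le_or_gt (1 - α * u) 0 with h | h
  · linarith
  · have hα1 : (0:ℝ) < α + 1 := by linarith
    have hw : 1/(α+1) + α/(α+1) = 1 := by field_simp; ring
    have hg := Real.geom_mean_le_arith_mean2_weighted
      (by positivity : (0:ℝ) ≤ 1/(α+1)) (by positivity : (0:ℝ) ≤ α/(α+1))
      h.le h1u.le hw
    have e2 : 1/(α+1) * (1 - α*u) + α/(α+1) * (1+u) = 1 := by field_simp; ring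
    rw [e2] at hg
    -- raise to power α+1
    have hg2 : ((1 - α*u) ^ (1/(α+1)) * (1+u) ^ (α/(α+1))) ^ (α+1) ≤ 1 ^ (α+1) :=
      Real.rpow_le_rpow (by positivity) hg hα1.le
    rw [Real.one_rpow] at hg2
    have e3 : ((1 - α*u) ^ (1/(α+1)) * (1+u) ^ (α/(α+1))) ^ (α+1)
        = (1 - α*u) * (1+u) ^ α := by
      rw [Real.mul_rpow (by positivity) (by positivity), ← Real.rpow_mul h.le,
        ← Real.rpow_mul h1u.le]
      rw [show 1/(α+1) * (α+1) = 1 by field_simp, show α/(α+1) * (α+1) = α by field_simp,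
        Real.rpow_one]
    rw [e3] at hg2
    have hq : (0:ℝ) < (1+u) ^ α := rpow_pos_of_pos h1u _
    rw [Real.rpow_neg h1u.le, ← one_div, le_div_iff₀ hq]
    exact hg2

/-- Explicit formula for the Fenchel conjugate of the two-sided power utility. -/
theorem power_utility_conjugate (α : ℝ) (hα : 0 < α) (U : ℝ → ℝ)
    (hU : ∀ x : ℝ, U x =
      if 0 < x then -(1 / α) * ((x + 1) ^ (-α) - 1)
      else -(1 / (α + 2)) * ((1 - x) ^ (α + 2) - 1)) :
    ∀ y > (0 : ℝ),
      (1 < y →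
        (⨆ x : ℝ, (U x - x * y)) =
          1 / (α + 2) - y + (1 - 1 / (α + 2)) * y ^ ((α + 2) / (α + 1))) ∧
      (y ≤ 1 →
        (⨆ x : ℝ, (U x - x * y)) =
          1 / α + y - (1 + 1 / α) * y ^ (α / (α + 1))) := by
  intro y hy
  have hα1 : (0:ℝ) < α + 1 := by linarith
  have hα2 : (0:ℝ) < α + 2 := by linarith
  have hecoef : (α+1)/(α+2) = 1 - 1/(α+2) := by field_simp <;> ring
  set M₁ := 1 / α + y - (1 + 1 / α) * y ^ (α / (α + 1)) with hM₁def
  set M₂ := 1 / (α + 2) - y + (1 - 1 / (α + 2)) * y ^ ((α + 2) / (α + 1)) with hM₂def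
  -- branch bounds
  have hb1 : ∀ x : ℝ, 0 < x → U x - x * y ≤ M₁ := by
    intro x hx
    rw [hU x, if_pos hx, hM₁def]
    have h := pu_amgm1 hα (show (0:ℝ) < x + 1 by linarith) hy
    have e : -(1 / α) * ((x + 1) ^ (-α) - 1) - x * y
        - (1 / α + y - (1 + 1 / α) * y ^ (α / (α + 1)))
        = (1 + 1/α) * y ^ (α/(α+1)) - ((x+1) ^ (-α) / α + (x+1) * y) := by ring
    linarith [e]
  have hb2 : ∀ x : ℝ, x ≤ 0 → U x - x * y ≤ M₂ := by
    intro x hx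
    rw [hU x, if_neg (not_lt.2 hx), hM₂def]
    have h := pu_amgm2 hα (show (0:ℝ) < 1 - x by linarith) hy
    rw [hecoef] at h
    have e : -(1 / (α + 2)) * ((1 - x) ^ (α + 2) - 1) - x * y
        - (1 / (α + 2) - y + (1 - 1 / (α + 2)) * y ^ ((α + 2) / (α + 1)))
        = (1-x) * y - ((1-x) ^ (α+2) / (α+2) + (1 - 1/(α+2)) * y ^ ((α+2)/(α+1))) := by ring
    linarith [e]
  have hM1 : 0 ≤ M₁ := by
    have h := pu_amgm1 hα one_pos hy
    rw [Real.one_rpow, one_mul] at h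
    rw [hM₁def]; linarith [h]
  have hM2 : 0 ≤ M₂ := by
    have h := pu_amgm2 hα one_pos hy
    rw [Real.one_rpow, one_mul, hecoef] at h
    rw [hM₂def]; linarith [h]
  have hb3 : y ≤ 1 → ∀ x : ℝ, x ≤ 0 → U x - x * y ≤ 0 := by
    intro hy1 x hx
    rw [hU x, if_neg (not_lt.2 hx)]
    have hb := one_add_mul_self_le_rpow_one_add (show (-1:ℝ) ≤ -x by linarith)
      (show (1:ℝ) ≤ α + 2 by linarith)
    rw [show (1:ℝ) + -x = 1 - x from by ring] at hb
    have h1 : 1/(α+2) - x ≤ 1/(α+2) * (1-x)^(α+2) := by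
      calc 1/(α+2) - x = 1/(α+2) * (1 + (α+2) * -x) := by field_simp <;> ring
        _ ≤ 1/(α+2) * (1-x)^(α+2) :=
          mul_le_mul_of_nonneg_left hb (by positivity)
    have h2 : x * (1 - y) ≤ 0 := mul_nonpos_of_nonpos_of_nonneg hx (by linarith)
    have e : -(1 / (α + 2)) * ((1 - x) ^ (α + 2) - 1) - x * y
        = (1/(α+2) - x - 1/(α+2) * (1-x)^(α+2)) + x * (1 - y) := by ring
    linarith [e, h1, h2]
  have hb4 : 1 ≤ y → ∀ x : ℝ, 0 < x → U x - x * y ≤ 0 := by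
    intro hy1 x hx
    rw [hU x, if_pos hx]
    have hbn := pu_bern_neg hα hx.le
    rw [show (1:ℝ) + x = x + 1 from by ring] at hbn
    have h1 : 1/α - x ≤ 1/α * (x+1)^(-α) := by
      calc 1/α - x = 1/α * (1 - α*x) := by field_simp <;> ring
        _ ≤ 1/α * (x+1)^(-α) := mul_le_mul_of_nonneg_left hbn (by positivity)
    have h2 : x * (1 - y) ≤ 0 := mul_nonpos_of_nonneg_of_nonpos hx.le (by linarith)
    have e : -(1 / α) * ((x + 1) ^ (-α) - 1) - x * y
        = (1/α - x - 1/α * (x+1)^(-α)) + x * (1 - y) := by ring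
    linarith [e, h1, h2]
  constructor
  · -- case 1 < y
    intro hy1
    have hub : ∀ x : ℝ, U x - x * y ≤ M₂ := by
      intro x
      by_cases hx : 0 < x
      · exact (hb4 hy1.le x hx).trans hM2
      · exact hb2 x (not_lt.1 hx)
    have hc1 : 1 ≤ y ^ (1/(α+1)) := Real.one_le_rpow hy1.le (by positivity)
    have hx₀ : (1 - y ^ (1/(α+1))) ≤ 0 := by linarith
    have hkey : U (1 - y ^ (1/(α+1))) - (1 - y ^ (1/(α+1))) * y = M₂ := by
      rw [hU, if_neg (not_lt.2 hx₀)]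
      rw [show (1:ℝ) - (1 - y ^ (1/(α+1))) = y ^ (1/(α+1)) from by ring]
      have e1 : (y^(1/(α+1)))^(α+2) = y^((α+2)/(α+1)) := by
        rw [← Real.rpow_mul hy.le]
        congr 1
        ring
      have e2 : y^((α+2)/(α+1)) = y^(1/(α+1)) * y := by
        rw [show (α+2)/(α+1) = 1/(α+1) + 1 from by field_simp <;> ring,
          Real.rpow_add hy, Real.rpow_one]
      rw [e1, hM₂def, e2]; ring
    have hbdd : BddAbove (Set.range fun x : ℝ => U x - x * y) :=
      ⟨M₂, fun v hv => by obtain ⟨x, rfl⟩ := hv; exact hub x⟩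
    refine le_antisymm (ciSup_le hub) ?_
    calc M₂ = U (1 - y ^ (1/(α+1))) - (1 - y ^ (1/(α+1))) * y := hkey.symm
      _ ≤ ⨆ x : ℝ, (U x - x * y) := le_ciSup hbdd _
  · -- case y ≤ 1
    intro hy1
    have hub : ∀ x : ℝ, U x - x * y ≤ M₁ := by
      intro x
      by_cases hx : 0 < x
      · exact hb1 x hx
      · exact (hb3 hy1 x (not_lt.1 hx)).trans hM1
    have hbdd : BddAbove (Set.range fun x : ℝ => U x - x * y) :=
      ⟨M₁, fun v hv => by obtain ⟨x, rfl⟩ := hv; exact hub x⟩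
    refine le_antisymm (ciSup_le hub) ?_
    rcases eq_or_lt_of_le hy1 with heq | hlt
    · -- y = 1, witness x = 0
      have h0 : U 0 - 0 * y = M₁ := by
        rw [hU 0, if_neg (lt_irrefl 0), hM₁def, heq]
        norm_num [Real.one_rpow]
        ring
      calc M₁ = U 0 - 0 * y := h0.symm
        _ ≤ ⨆ x : ℝ, (U x - x * y) := le_ciSup hbdd _
    · -- y < 1, witness x = y^(-(1/(α+1))) - 1
      have hc1 : 1 < y ^ (-(1/(α+1))) := by
        rw [Real.one_lt_rpow_iff_of_pos hy]
        right
        refine ⟨hlt, ?_⟩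
        rw [neg_lt, neg_zero]
        positivity
      have hx₁ : 0 < y ^ (-(1/(α+1))) - 1 := by linarith
      have hkey : U (y ^ (-(1/(α+1))) - 1) - (y ^ (-(1/(α+1))) - 1) * y = M₁ := by
        rw [hU, if_pos hx₁]
        rw [show y ^ (-(1/(α+1))) - 1 + 1 = y ^ (-(1/(α+1))) from by ring]
        have e1 : (y^(-(1/(α+1))))^(-α) = y^(α/(α+1)) := by
          rw [← Real.rpow_mul hy.le]
          congr 1
          ring
        have e2 : y^(α/(α+1)) = y^(-(1/(α+1))) * y := by
          rw [show α/(α+1) = -(1/(α+1)) + 1 from by field_simp <;> ring,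
            Real.rpow_add hy, Real.rpow_one]
        rw [e1, hM₁def, e2]; ring
      calc M₁ = U (y ^ (-(1/(α+1))) - 1) - (y ^ (-(1/(α+1))) - 1) * y := hkey.symm
        _ ≤ ⨆ x : ℝ, (U x - x * y) := le_ciSup hbdd _
end

section
/- Fix α₀ > 0 and for α > 0 let V_α : (0,∞) → ℝ be given by V_α(y) = 1/(α+2) − y + (1 − 1/(α+2))·y^{(α+2)/(α+1)} for y > 1 and V_α(y) = 1/α + y − (1 + 1/α)·y^{α/(α+1)} for 0 < y ≤ 1 (the Fenchel conjugate of the two-sided power utility). Then for every interval [λ₀, λ₁] ⊂ (0,∞) there exist constants C₁, C₂, C₃ ≥ 0 such that V_α(λ y) ≤ C₁ V_α(y) + C₂ y + C₃ for all α ≥ α₀, all y > 0 and all λ ∈ [λ₀, λ₁]. -/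
private lemma aux_lower_gt (α y : ℝ) (hα : 0 < α) (hy : 1 ≤ y) :
    y ≤ (1 - 1 / (α + 2)) * y ^ ((α + 2) / (α + 1)) + 1 / (α + 2) := by
  have hy0 : (0:ℝ) ≤ y := le_trans zero_le_one hy
  have h1 : (0:ℝ) < α + 1 := by linarith
  have h2 : (0:ℝ) < α + 2 := by linarith
  set p : ℝ := (α + 2) / (α + 1) with hp
  have hpnn : 0 ≤ y ^ p := Real.rpow_nonneg hy0 p
  have hw : (α + 1) / (α + 2) + 1 / (α + 2) = 1 := by field_simp; ring
  have hgm := Real.geom_mean_le_arith_mean2_weighted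
    (by positivity : (0:ℝ) ≤ (α + 1) / (α + 2)) (by positivity : (0:ℝ) ≤ 1 / (α + 2))
    hpnn zero_le_one hw
  simp only [Real.one_rpow, mul_one] at hgm
  have hpow : (y ^ p) ^ ((α + 1) / (α + 2)) = y := by
    rw [← Real.rpow_mul hy0]
    have : p * ((α + 1) / (α + 2)) = 1 := by rw [hp]; field_simp
    rw [this, Real.rpow_one]
  rw [hpow] at hgm
  have : (α + 1) / (α + 2) = 1 - 1 / (α + 2) := by field_simp; ring
  linarith [hgm, this ▸ hgm]

private lemma aux_nonneg_le (α y : ℝ) (hα : 0 < α) (hy : 0 < y) (hy1 : y ≤ 1) :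
    0 ≤ 1 / α + y - (1 + 1 / α) * y ^ (α / (α + 1)) := by
  have h1 : (0:ℝ) < α + 1 := by linarith
  set q : ℝ := α / (α + 1) with hq
  have hw : q + 1 / (α + 1) = 1 := by rw [hq]; field_simp
  have hgm := Real.geom_mean_le_arith_mean2_weighted
    (by positivity : (0:ℝ) ≤ q) (by positivity : (0:ℝ) ≤ 1 / (α + 1))
    hy.le zero_le_one hw
  simp only [Real.one_rpow, mul_one] at hgm
  -- hgm : y ^ q ≤ q * y + 1/(α+1)
  have hmul : (1 + 1 / α) * y ^ q ≤ (1 + 1 / α) * (q * y + 1 / (α + 1)) := by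
    apply mul_le_mul_of_nonneg_left hgm
    positivity
  have heq : (1 + 1 / α) * (q * y + 1 / (α + 1)) = y + 1 / α := by
    rw [hq]; field_simp
  linarith [hmul, heq ▸ hmul]

set_option maxHeartbeats 1000000 in
/-- Uniform elasticity estimate for the conjugates of the two-sided power utilities,
uniformly over `α ≥ α₀`. -/
theorem power_conjugate_uniform_elasticity (α₀ : ℝ) (hα₀ : 0 < α₀)
    (V : ℝ → ℝ → ℝ)
    (hV : ∀ α > (0 : ℝ), ∀ y > (0 : ℝ), V α y =
      if 1 < y then 1 / (α + 2) - y + (1 - 1 / (α + 2)) * y ^ ((α + 2) / (α + 1))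
      else 1 / α + y - (1 + 1 / α) * y ^ (α / (α + 1)))
    (lo hi : ℝ) (hlo : 0 < lo) (hlohi : lo ≤ hi) :
    ∃ C₁ C₂ C₃ : ℝ, 0 ≤ C₁ ∧ 0 ≤ C₂ ∧ 0 ≤ C₃ ∧
      ∀ α ≥ α₀, ∀ y > (0 : ℝ), ∀ l ∈ Set.Icc lo hi,
        V α (l * y) ≤ C₁ * V α y + C₂ * y + C₃ := by
  have hhi : 0 < hi := lt_of_lt_of_le hlo hlohi
  set K : ℝ := max 1 (hi ^ 2) with hK
  have hK1 : (1:ℝ) ≤ K := le_max_left _ _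
  have hK0 : (0:ℝ) ≤ K := by linarith
  refine ⟨2 * K, 2 * K + hi, 1 / α₀ + 1 / 2 + K, by linarith, by linarith, by positivity, ?_⟩
  intro α hα y hy l hl
  obtain ⟨hl1, hl2⟩ := hl
  have hα0 : 0 < α := lt_of_lt_of_le hα₀ hα
  have hlpos : 0 < l := lt_of_lt_of_le hlo hl1
  have hly : 0 < l * y := mul_pos hlpos hy
  have h1 : (0:ℝ) < α + 1 := by linarith
  have h2 : (0:ℝ) < α + 2 := by linarith
  rw [hV α hα0 (l * y) hly, hV α hα0 y hy]
  set p : ℝ := (α + 2) / (α + 1) with hp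
  set q : ℝ := α / (α + 1) with hq
  have hp0 : 0 ≤ p := by positivity
  have hp2 : p ≤ 2 := by rw [hp, div_le_iff₀ h1]; linarith
  -- nonnegativity of V α y
  have hVy : 0 ≤ (if 1 < y then 1 / (α + 2) - y + (1 - 1 / (α + 2)) * y ^ p
      else 1 / α + y - (1 + 1 / α) * y ^ q) := by
    split_ifs with h
    · have := aux_lower_gt α y hα0 h.le
      rw [← hp] at this
      linarith
    · have := aux_nonneg_le α y hα0 hy (le_of_not_gt h)
      rw [← hq] at this
      exact this
  -- bound on l ^ p
  have hlp : l ^ p ≤ K := by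
    rcases le_or_gt l 1 with h | h
    · exact le_trans (Real.rpow_le_one hlpos.le h hp0) hK1
    · calc l ^ p ≤ l ^ (2:ℝ) := Real.rpow_le_rpow_of_exponent_le h.le hp2
        _ = l ^ 2 := Real.rpow_two l
        _ ≤ hi ^ 2 := by nlinarith
        _ ≤ K := le_max_right _ _
  by_cases hly1 : 1 < l * y
  · rw [if_pos hly1]
    have hmulp : (l * y) ^ p = l ^ p * y ^ p := Real.mul_rpow hlpos.le hy.le
    have hyp0 : 0 ≤ y ^ p := Real.rpow_nonneg hy.le p
    have hh : 1 / (α + 2) ≤ 1 / 2 := by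
      rw [div_le_div_iff₀ h2 two_pos]; linarith
    have hh0 : 0 ≤ 1 / (α + 2) := by positivity
    have hcoef : (1 - 1 / (α + 2)) * ((l * y) ^ p) ≤ K * y ^ p := by
      have h3 : (l * y) ^ p ≤ K * y ^ p := by
        rw [hmulp]; exact mul_le_mul_of_nonneg_right hlp hyp0
      have h4 : 0 ≤ (l * y) ^ p := Real.rpow_nonneg hly.le p
      nlinarith
    by_cases hy1 : 1 < y
    · rw [if_pos hy1] at hVy ⊢
      -- growth: (1/2) y^p ≤ V α y + y
      have hgrow : (1/2 : ℝ) * y ^ p ≤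
          (1 / (α + 2) - y + (1 - 1 / (α + 2)) * y ^ p) + y := by nlinarith
      have hKgrow : K * y ^ p ≤ 2 * K * (1 / (α + 2) - y + (1 - 1 / (α + 2)) * y ^ p)
          + 2 * (K * y) := by nlinarith [mul_le_mul_of_nonneg_left hgrow hK0]
      nlinarith [mul_nonneg hK0 hy.le, mul_nonneg hhi.le hy.le, (by positivity : (0:ℝ) < 1 / α₀)]
    · rw [if_neg hy1] at hVy ⊢
      have hyp1 : y ^ p ≤ 1 := Real.rpow_le_one hy.le (le_of_not_gt hy1) hp0
      have hb : (1 - 1 / (α + 2)) * ((l * y) ^ p) ≤ K := by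
        calc (1 - 1 / (α + 2)) * ((l * y) ^ p) ≤ K * y ^ p := hcoef
          _ ≤ K * 1 := mul_le_mul_of_nonneg_left hyp1 hK0
          _ = K := mul_one K
      nlinarith [mul_nonneg (by linarith : (0:ℝ) ≤ 2 * K) hVy, mul_nonneg hK0 hy.le,
        mul_nonneg hhi.le hy.le, (by positivity : (0:ℝ) < 1 / α₀)]
  · rw [if_neg hly1]
    have hterm : 0 ≤ (1 + 1 / α) * (l * y) ^ q := by positivity
    have hinv : 1 / α ≤ 1 / α₀ := one_div_le_one_div_of_le hα₀ hα
    have hlyb : l * y ≤ hi * y := mul_le_mul_of_nonneg_right hl2 hy.le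
    nlinarith [mul_nonneg (by linarith : (0:ℝ) ≤ 2 * K) hVy, mul_nonneg hK0 hy.le,
      mul_nonneg hhi.le hy.le]
end
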